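/- The following conditions are equivalent for a ring R: (1) every non-zero right ideal of R has a serial factorization; (2) the principal right ideal rR has a serial factorization for every non-zero element r ∈ R. -/

import Mathlib

open MulOpposite

universe u

/-- The product `A·B` of two right ideals of `R` (right ideals are `Rᵐᵒᵖ`-submodules of `R`):
the set of all finite sums of products `a * b` with `a ∈ A`, `b ∈ B`. -/
def rmul {R : Type u} [Ring R] (A B : Submodule Rᵐᵒᵖ R) : Submodule Rᵐᵒᵖ R :=
  Submodule.span Rᵐᵒᵖ {x : R | ∃ a ∈ A, ∃ b ∈ B, x = a * b}

/-- The product `A₁⋯Aₙ` of a (possibly empty) list of right ideals. -/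
def rprod {R : Type u} [Ring R] : List (Submodule Rᵐᵒᵖ R) → Submodule Rᵐᵒᵖ R
  | [] => ⊤
  | [A] => A
  | A :: l => rmul A (rprod l)

/-- A finite family of right ideals is coindependent if `Aᵢ + ⋂_{j ≠ i} Aⱼ = R` for every `i`. -/
def Coindep {R : Type u} [Ring R] {n : ℕ} (A : Fin n → Submodule Rᵐᵒᵖ R) : Prop :=
  ∀ i, A i ⊔ (⨅ j, ⨅ (_ : j ≠ i), A j) = ⊤

/-- A module is uniserial if its submodules are linearly ordered by inclusion. -/
def IsUniserialMod (S : Type*) [Ring S] (M : Type*) [AddCommGroup M] [Module S M] : Prop :=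
  ∀ N P : Submodule S M, N ≤ P ∨ P ≤ N

/-- A right ideal is a two-sided ideal if it is also closed under left multiplication. -/
def IsTwoSidedRid {R : Type u} [Ring R] (A : Submodule Rᵐᵒᵖ R) : Prop :=
  ∀ (r : R), ∀ x ∈ A, r * x ∈ A

/-- A serial factorization of a right ideal `A`: a factorization `A = A₁⋯Aₙ` into proper
right ideals that pairwise commute, form a coindependent family, and are such that every
quotient `R/Aᵢ` is a uniserial right `R`-module. -/
def IsSerialFact {R : Type u} [Ring R] {n : ℕ} (A : Submodule Rᵐᵒᵖ R)
    (F : Fin n → Submodule Rᵐᵒᵖ R) : Prop :=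
  (∀ i, F i ≠ ⊤) ∧ (∀ i j, rmul (F i) (F j) = rmul (F j) (F i)) ∧ Coindep F ∧
    (∀ i, IsUniserialMod Rᵐᵒᵖ (R ⧸ F i)) ∧ A = rprod (List.ofFn F)

/-- A right ideal has a serial factorization if it admits one of some length. -/
def HasSerialFact {R : Type u} [Ring R] (A : Submodule Rᵐᵒᵖ R) : Prop :=
  ∃ (n : ℕ) (F : Fin n → Submodule Rᵐᵒᵖ R), IsSerialFact A F

/-- A right chain ring: its right ideals are linearly ordered by inclusion. -/
def IsRightChainRing (R : Type u) [Ring R] : Prop :=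
  ∀ A B : Submodule Rᵐᵒᵖ R, A ≤ B ∨ B ≤ A

/-- A ring is right duo if every right ideal is a two-sided ideal. -/
def IsRightDuo (R : Type u) [Ring R] : Prop :=
  ∀ A : Submodule Rᵐᵒᵖ R, IsTwoSidedRid A

/-- The principal right ideal `rR`. -/
def rspan {R : Type u} [Ring R] (r : R) : Submodule Rᵐᵒᵖ R :=
  Submodule.span Rᵐᵒᵖ ({r} : Set R)

section Helpers
variable {R : Type u} [Ring R]

lemma mem_right_mul {A : Submodule Rᵐᵒᵖ R} {x : R} (h : x ∈ A) (r : R) : x * r ∈ A := by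
  simpa [op_smul_eq_mul] using A.smul_mem (op r) h

lemma mem_rmul {A B : Submodule Rᵐᵒᵖ R} {a b : R} (ha : a ∈ A) (hb : b ∈ B) :
    a * b ∈ rmul A B :=
  Submodule.subset_span ⟨a, ha, b, hb, rfl⟩

lemma rmul_le {A B C : Submodule Rᵐᵒᵖ R} (h : ∀ a ∈ A, ∀ b ∈ B, a * b ∈ C) :
    rmul A B ≤ C := by
  rw [rmul, Submodule.span_le]
  rintro x ⟨a, ha, b, hb, rfl⟩
  exact h a ha b hb

lemma rmul_le_left {A B : Submodule Rᵐᵒᵖ R} : rmul A B ≤ A :=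
  rmul_le fun a ha b _ => mem_right_mul ha b

lemma rmul_le_right {A B : Submodule Rᵐᵒᵖ R} (hB : IsTwoSidedRid B) : rmul A B ≤ B :=
  rmul_le fun a _ b hb => hB a b hb

lemma rmul_mono {A B A' B' : Submodule Rᵐᵒᵖ R} (h1 : A ≤ A') (h2 : B ≤ B') :
    rmul A B ≤ rmul A' B' :=
  rmul_le fun a ha b hb => mem_rmul (h1 ha) (h2 hb)

lemma rmul_top {A : Submodule Rᵐᵒᵖ R} : rmul A ⊤ = A := by
  refine le_antisymm rmul_le_left fun a ha => ?_
  simpa using mem_rmul ha (Submodule.mem_top (x := (1 : R)))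

lemma rmul_assoc (A B C : Submodule Rᵐᵒᵖ R) :
    rmul (rmul A B) C = rmul A (rmul B C) := by
  refine le_antisymm ?_ ?_
  · refine rmul_le fun y hy c hc => ?_
    have key : ∀ y ∈ rmul A B, ∀ r : R, ∀ c ∈ C, y * r * c ∈ rmul A (rmul B C) := by
      intro y hy
      refine Submodule.span_induction ?_ ?_ ?_ ?_ hy
      · rintro x ⟨a, ha, b, hb, rfl⟩ r c hc
        rw [mul_assoc a b r, mul_assoc a (b * r) c]
        exact mem_rmul ha (mem_rmul (mem_right_mul hb r) hc)
      · intro r c hc; simpa using (rmul A (rmul B C)).zero_mem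
      · intro x y _ _ hx hy r c hc
        rw [add_mul, add_mul]
        exact add_mem (hx r c hc) (hy r c hc)
      · intro s x _ hx r c hc
        rw [← op_unop s, op_smul_eq_mul, mul_assoc x (unop s) r]
        exact hx (unop s * r) c hc
    simpa using key y hy 1 c hc
  · refine rmul_le fun a ha z hz => ?_
    induction hz using Submodule.span_induction with
    | mem x hx =>
        obtain ⟨b, hb, c, hc, rfl⟩ := hx
        rw [← mul_assoc]
        exact mem_rmul (mem_rmul ha hb) hc
    | zero => simpa using (rmul (rmul A B) C).zero_mem
    | add x y _ _ hx hy => rw [mul_add]; exact add_mem hx hy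
    | smul s x _ hx =>
        rw [← op_unop s, op_smul_eq_mul, ← mul_assoc]
        exact mem_right_mul hx (unop s)

lemma exists_one_decomp {A B : Submodule Rᵐᵒᵖ R} (h : A ⊔ B = ⊤) :
    ∃ u ∈ A, ∃ v ∈ B, u + v = 1 := by
  have : (1 : R) ∈ A ⊔ B := h ▸ Submodule.mem_top
  obtain ⟨u, hu, v, hv, huv⟩ := Submodule.mem_sup.mp this
  exact ⟨u, hu, v, hv, huv⟩

lemma rmul_eq_inf {A B : Submodule Rᵐᵒᵖ R} (hsup : A ⊔ B = ⊤)
    (hcomm : rmul A B = rmul B A) : rmul A B = A ⊓ B := by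
  refine le_antisymm (le_inf rmul_le_left (hcomm ▸ rmul_le_left)) fun z hz => ?_
  obtain ⟨u, hu, v, hv, huv⟩ := exists_one_decomp hsup
  have : z = z * u + z * v := by rw [← mul_add, huv, mul_one]
  rw [this]
  exact add_mem (hcomm ▸ mem_rmul hz.2 hu) (mem_rmul hz.1 hv)

end Helpers

section Helpers2
variable {R : Type u} [Ring R]

lemma rprod_nil : rprod ([] : List (Submodule Rᵐᵒᵖ R)) = ⊤ := rfl

lemma rprod_singleton (A : Submodule Rᵐᵒᵖ R) : rprod [A] = A := rfl

lemma rprod_cons (X : Submodule Rᵐᵒᵖ R) (l : List (Submodule Rᵐᵒᵖ R)) :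
    rprod (X :: l) = rmul X (rprod l) := by
  cases l with
  | nil => rw [rprod_singleton, rprod_nil, rmul_top]
  | cons Y t => rfl

lemma rmul_rprod_comm {X : Submodule Rᵐᵒᵖ R} {l : List (Submodule Rᵐᵒᵖ R)}
    (hl : l ≠ []) (h : ∀ Y ∈ l, rmul X Y = rmul Y X) :
    rmul X (rprod l) = rmul (rprod l) X := by
  induction l with
  | nil => exact absurd rfl hl
  | cons Y t ih =>
    rcases eq_or_ne t [] with rfl | ht
    · rw [rprod_singleton]
      exact h Y (by simp)
    · have hXY : rmul X Y = rmul Y X := h Y (by simp)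
      have hXt : rmul X (rprod t) = rmul (rprod t) X :=
        ih ht (fun Z hZ => h Z (by simp [hZ]))
      rw [rprod_cons, ← rmul_assoc, hXY, rmul_assoc, hXt, ← rmul_assoc]

lemma iInf_ne_zero_succ {n : ℕ} (F : Fin (n + 1) → Submodule Rᵐᵒᵖ R) :
    (⨅ j, ⨅ (_ : j ≠ (0 : Fin (n+1))), F j) ≤ ⨅ i : Fin n, F i.succ := by
  refine le_iInf fun i => ?_
  exact iInf₂_le i.succ (Fin.succ_ne_zero i)

lemma inf_succ_eq {n : ℕ} (F : Fin (n + 1) → Submodule Rᵐᵒᵖ R) :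
    F 0 ⊓ (⨅ i : Fin n, F i.succ) = ⨅ i, F i := by
  refine le_antisymm (le_iInf fun i => ?_) (le_inf (iInf_le _ 0) (le_iInf fun j => iInf_le _ j.succ))
  induction i using Fin.cases with
  | zero => exact inf_le_left
  | succ j => exact inf_le_right.trans (iInf_le _ j)

lemma rprod_eq_iInf : ∀ {n : ℕ} (F : Fin n → Submodule Rᵐᵒᵖ R),
    (∀ i j, rmul (F i) (F j) = rmul (F j) (F i)) → Coindep F →
    rprod (List.ofFn F) = ⨅ i, F i := by
  intro n
  induction n with
  | zero =>
      intro F _ _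
      rw [List.ofFn_zero, rprod_nil, iInf_of_empty]
  | succ n ih =>
    intro F hcomm hco
    set G : Fin n → Submodule Rᵐᵒᵖ R := fun i => F i.succ with hG
    have hGcomm : ∀ i j, rmul (G i) (G j) = rmul (G j) (G i) := fun i j => hcomm _ _
    have hGco : Coindep G := by
      intro i
      rw [eq_top_iff]
      refine le_trans (le_of_eq (hco i.succ).symm) (sup_le_sup le_rfl ?_)
      refine le_iInf fun j => le_iInf fun hj => ?_
      exact iInf₂_le j.succ (by simpa [Fin.succ_inj] using hj)
    have hihf : rprod (List.ofFn G) = ⨅ i, G i := ih G hGcomm hGco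
    have hstep : rprod (List.ofFn F) = rmul (F 0) (rprod (List.ofFn G)) := by
      rw [List.ofFn_succ, rprod_cons]
    rcases Nat.eq_zero_or_pos n with rfl | hn
    · rw [hstep]
      have : rprod (List.ofFn G) = ⊤ := by rw [List.ofFn_zero, rprod_nil]
      rw [this, rmul_top, ← inf_succ_eq F]
      simp
    · have hne : List.ofFn G ≠ [] := by
        simp [List.ofFn_eq_nil_iff]; omega
      have hc : rmul (F 0) (rprod (List.ofFn G)) = rmul (rprod (List.ofFn G)) (F 0) := by
        refine rmul_rprod_comm hne fun Y hY => ?_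
        obtain ⟨i, rfl⟩ := List.mem_ofFn.mp hY
        exact hcomm 0 _
      have hsup : F 0 ⊔ rprod (List.ofFn G) = ⊤ := by
        rw [eq_top_iff, ← hco 0]
        exact sup_le_sup le_rfl (le_trans (iInf_ne_zero_succ F) (le_of_eq hihf.symm))
      rw [hstep, rmul_eq_inf hsup hc, hihf, inf_succ_eq]

lemma uniserial_iff_ordered (D : Submodule Rᵐᵒᵖ R) :
    IsUniserialMod Rᵐᵒᵖ (R ⧸ D) ↔
      ∀ X Y : Submodule Rᵐᵒᵖ R, D ≤ X → D ≤ Y → (X ≤ Y ∨ Y ≤ X) := by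
  constructor
  · intro h X Y hX hY
    rcases h (Submodule.map D.mkQ X) (Submodule.map D.mkQ Y) with hle | hle
    · left
      have := Submodule.comap_mono (f := D.mkQ) hle
      rw [Submodule.comap_map_eq, Submodule.comap_map_eq, Submodule.ker_mkQ] at this
      calc X ≤ X ⊔ D := le_sup_left
        _ ≤ Y ⊔ D := this
        _ = Y := sup_eq_left.mpr hY
    · right
      have := Submodule.comap_mono (f := D.mkQ) hle
      rw [Submodule.comap_map_eq, Submodule.comap_map_eq, Submodule.ker_mkQ] at this
      calc Y ≤ Y ⊔ D := le_sup_left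
        _ ≤ X ⊔ D := this
        _ = X := sup_eq_left.mpr hX
  · intro h N P
    have hker : Submodule.comap D.mkQ ⊥ = D := by
      rw [Submodule.comap_bot, Submodule.ker_mkQ]
    have hN : D ≤ Submodule.comap D.mkQ N :=
      le_trans (le_of_eq hker.symm) (Submodule.comap_mono bot_le)
    have hP : D ≤ Submodule.comap D.mkQ P :=
      le_trans (le_of_eq hker.symm) (Submodule.comap_mono bot_le)
    rcases h _ _ hN hP with hle | hle
    · left
      have := Submodule.map_mono (f := D.mkQ) hle
      rwa [Submodule.map_comap_eq, Submodule.map_comap_eq,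
        Submodule.range_mkQ, top_inf_eq, top_inf_eq] at this
    · right
      have := Submodule.map_mono (f := D.mkQ) hle
      rwa [Submodule.map_comap_eq, Submodule.map_comap_eq,
        Submodule.range_mkQ, top_inf_eq, top_inf_eq] at this

lemma mem_rspan_self (r : R) : r ∈ rspan r := Submodule.subset_span rfl

lemma rspan_le {r : R} {X : Submodule Rᵐᵒᵖ R} (h : r ∈ X) : rspan r ≤ X := by
  rw [rspan, Submodule.span_le, Set.singleton_subset_iff]; exact h

lemma iInf_twoSided {ι : Sort*} {F : ι → Submodule Rᵐᵒᵖ R}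
    (h : ∀ i, IsTwoSidedRid (F i)) : IsTwoSidedRid (⨅ i, F i) := by
  intro r x hx
  rw [Submodule.mem_iInf] at hx ⊢
  exact fun i => h i r x (hx i)

end Helpers2

section Core
variable {R : Type u} [Ring R]

lemma mem_of_mem_compInf {n : ℕ} {A : Fin n → Submodule Rᵐᵒᵖ R} {i j : Fin n} (hj : j ≠ i)
    {x : R} (hx : x ∈ (⨅ k, ⨅ (_ : k ≠ i), A k)) : x ∈ A j :=
  (Submodule.mem_iInf _).mp ((Submodule.mem_iInf _).mp hx j) hj

lemma sup_comax {n : ℕ} {A : Fin n → Submodule Rᵐᵒᵖ R} (hco : Coindep A)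
    {i j : Fin n} (hij : j ≠ i) : A i ⊔ A j = ⊤ := by
  rw [eq_top_iff, ← hco i]
  exact sup_le_sup le_rfl (iInf₂_le j hij)

/-- In a coindependent, pairwise commuting family with at least two members,
every member is a two-sided ideal. -/
lemma factor_twoSided {n : ℕ} [Nontrivial (Fin n)] (A : Fin n → Submodule Rᵐᵒᵖ R)
    (hcomm : ∀ i j, rmul (A i) (A j) = rmul (A j) (A i)) (hco : Coindep A) (i : Fin n) :
    IsTwoSidedRid (A i) := by
  intro r x hx
  obtain ⟨j, hj⟩ := exists_ne i
  have hr : r ∈ A i ⊔ (⨅ k, ⨅ (_ : k ≠ i), A k) := by rw [hco i]; trivial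
  obtain ⟨ξ, hξ, η, hη, hξη⟩ := Submodule.mem_sup.mp hr
  have h1 : ξ * x ∈ A i := mem_right_mul hξ x
  have h2 : η * x ∈ A i :=
    rmul_le_left ((hcomm j i) ▸ mem_rmul (mem_of_mem_compInf hj hη) hx)
  have : r * x = ξ * x + η * x := by rw [← add_mul, hξη]
  rw [this]; exact add_mem h1 h2

lemma sub_sum_mem_iInf {n : ℕ} (A : Fin n → Submodule Rᵐᵒᵖ R)
    (hts : ∀ i, IsTwoSidedRid (A i)) (u v : Fin n → R) (hu : ∀ i, u i ∈ A i)
    (hv : ∀ i, v i ∈ ⨅ k, ⨅ (_ : k ≠ i), A k) (huv : ∀ i, u i + v i = 1) (x : R) :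
    x - ∑ j, x * v j ∈ ⨅ i, A i := by
  rw [Submodule.mem_iInf]
  intro i
  have h1 : x * u i ∈ A i := hts i x (u i) (hu i)
  have h2 : ∀ j ∈ Finset.univ.erase i, x * v j ∈ A i := by
    intro j hj
    exact hts i x (v j) (mem_of_mem_compInf (Finset.ne_of_mem_erase hj).symm (hv j))
  have h3 : x * u i = x - x * v i := by
    refine eq_sub_of_add_eq ?_
    rw [← mul_add, huv i, mul_one]
  have hsplit : x - ∑ j, x * v j = x * u i - ∑ j ∈ Finset.univ.erase i, x * v j := by
    rw [h3, ← Finset.add_sum_erase _ _ (Finset.mem_univ i)]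
    abel
  rw [hsplit]
  exact sub_mem h1 (Submodule.sum_mem _ h2)

lemma decomp_le {n : ℕ} (A : Fin n → Submodule Rᵐᵒᵖ R) (hts : ∀ i, IsTwoSidedRid (A i))
    (hco : Coindep A) (B : Submodule Rᵐᵒᵖ R) (hB : (⨅ i, A i) ≤ B) :
    (⨅ i, (B ⊔ A i)) ≤ B := by
  choose u hu v hv huv using fun i => exists_one_decomp (hco i)
  intro x hx
  rw [Submodule.mem_iInf] at hx
  have hterm : ∀ i, x * v i ∈ B := by
    intro i
    obtain ⟨b, hb, s, hs, hbs⟩ := Submodule.mem_sup.mp (hx i)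
    have : x * v i = b * v i + s * v i := by rw [← add_mul, hbs]
    rw [this]
    refine add_mem (mem_right_mul hb (v i)) (hB ?_)
    rw [Submodule.mem_iInf]
    intro l
    rcases eq_or_ne l i with rfl | hl
    · exact mem_right_mul hs (v l)
    · exact hts l s (v i) (mem_of_mem_compInf hl (hv i))
  have : x = (x - ∑ j, x * v j) + ∑ j, x * v j := by abel
  rw [this]
  exact add_mem (hB (sub_sum_mem_iInf A hts u v hu hv huv x))
    (Submodule.sum_mem _ fun j _ => hterm j)

lemma commB {n : ℕ} (A : Fin n → Submodule Rᵐᵒᵖ R) (hts : ∀ i, IsTwoSidedRid (A i))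
    (hcomm : ∀ i j, rmul (A i) (A j) = rmul (A j) (A i)) (hco : Coindep A)
    (B : Submodule Rᵐᵒᵖ R) (hB : (⨅ i, A i) ≤ B) (hBts : IsTwoSidedRid B)
    {i j : Fin n} (hij : i ≠ j) :
    rmul (B ⊔ A i) (B ⊔ A j) = B ⊔ rmul (A i) (A j) := by
  refine le_antisymm ?_ ?_
  · refine rmul_le fun x hx y hy => ?_
    obtain ⟨b, hb, s, hs, hbs⟩ := Submodule.mem_sup.mp hx
    obtain ⟨b', hb', s', hs', hbs'⟩ := Submodule.mem_sup.mp hy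
    have : x * y = b * y + (s * b' + s * s') := by
      rw [← hbs, add_mul, ← hbs', mul_add s b' s']
    rw [this]
    refine add_mem (Submodule.mem_sup_left ?_)
      (add_mem (Submodule.mem_sup_left ?_) (Submodule.mem_sup_right ?_))
    · exact mem_right_mul hb y
    · exact hBts s b' hb'
    · exact mem_rmul hs hs'
  · have hAiAj : rmul (A i) (A j) ≤ rmul (B ⊔ A i) (B ⊔ A j) :=
      rmul_mono le_sup_right le_sup_right
    refine sup_le ?_ hAiAj
    have hinf_le : (⨅ k, A k) ≤ rmul (B ⊔ A i) (B ⊔ A j) := by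
      refine le_trans ?_ hAiAj
      rw [rmul_eq_inf (sup_comax hco hij.symm) (hcomm i j)]
      exact le_inf (iInf_le _ i) (iInf_le _ j)
    choose u hu v hv huv using fun k => exists_one_decomp (hco k)
    intro x hxB
    have hterm : ∀ k, x * v k ∈ rmul (B ⊔ A i) (B ⊔ A j) := by
      intro k
      rcases eq_or_ne k j with hkj | hk
      · subst hkj
        have hsplit : x * v k = u i * (x * v k) + v i * (x * v k) := by
          rw [← add_mul, huv i, one_mul]
        rw [hsplit]
        refine add_mem (mem_rmul (Submodule.mem_sup_right (hu i))
          (Submodule.mem_sup_left (mem_right_mul hxB (v k)))) (hinf_le ?_)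
        rw [Submodule.mem_iInf]
        intro l
        rw [← mul_assoc]
        rcases eq_or_ne l i with hli | hl
        · have hvk : v k ∈ A l := by
            refine mem_of_mem_compInf ?_ (hv k)
            rw [hli]; exact hij
          exact hts l (v i * x) (v k) hvk
        · exact mem_right_mul (mem_right_mul (mem_of_mem_compInf hl (hv i)) x) (v k)
      · exact mem_rmul (Submodule.mem_sup_left hxB)
          (Submodule.mem_sup_right (mem_of_mem_compInf hk.symm (hv k)))
    have : x = (x - ∑ k, x * v k) + ∑ k, x * v k := by abel
    rw [this]
    exact add_mem (hinf_le (sub_sum_mem_iInf A hts u v hu hv huv x))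
      (Submodule.sum_mem _ fun k _ => hterm k)

lemma uniserial_of_le {D E : Submodule Rᵐᵒᵖ R} (h : D ≤ E)
    (hD : IsUniserialMod Rᵐᵒᵖ (R ⧸ D)) : IsUniserialMod Rᵐᵒᵖ (R ⧸ E) :=
  (uniserial_iff_ordered E).mpr fun X Y hX hY =>
    (uniserial_iff_ordered D).mp hD X Y (h.trans hX) (h.trans hY)

lemma hasSerialFact_top : HasSerialFact (⊤ : Submodule Rᵐᵒᵖ R) :=
  ⟨0, Fin.elim0, fun i => i.elim0, fun i => i.elim0, fun i => i.elim0, fun i => i.elim0,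
    by rw [List.ofFn_zero, rprod_nil]⟩

end Core

section Key
variable {R : Type u} [Ring R]

/-- Key step: under hypothesis (2), for a coindependent commuting family of proper right
ideals with at least two members, left multiples land in `bR + Aᵢ`. -/
lemma key_duo {n : ℕ} [Nontrivial (Fin n)]
    (hyp : ∀ r : R, r ≠ 0 → HasSerialFact (rspan r))
    (A : Fin n → Submodule Rᵐᵒᵖ R) (hprop : ∀ i, A i ≠ ⊤)
    (hcomm : ∀ i j, rmul (A i) (A j) = rmul (A j) (A i)) (hco : Coindep A)
    (i : Fin n) (b r : R) : r * b ∈ rspan b ⊔ A i := by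
  have hts : ∀ k, IsTwoSidedRid (A k) := factor_twoSided A hcomm hco
  have hb : b ∈ A i ⊔ (⨅ k, ⨅ (_ : k ≠ i), A k) := by rw [hco i]; trivial
  obtain ⟨t, ht, c, hc, htc⟩ := Submodule.mem_sup.mp hb
  have hcmem : ∀ j, j ≠ i → c ∈ A j := fun j hj => mem_of_mem_compInf hj hc
  have hcb : rspan c ≤ rspan b ⊔ A i := by
    refine rspan_le ?_
    have : c = b - t := by rw [← htc]; abel
    rw [this]
    exact sub_mem (Submodule.mem_sup_left (mem_rspan_self b)) (Submodule.mem_sup_right ht)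
  by_cases hc0 : c = 0
  · have hbt : b = t := by rw [← htc, hc0, add_zero]
    exact Submodule.mem_sup_right (hts i r b (hbt ▸ ht))
  obtain ⟨m, D, hDprop, hDcomm, hDco, hDuni, hDeq⟩ := hyp c hc0
  match m, D, hDprop, hDcomm, hDco, hDuni, hDeq with
  | 0, D, hDprop, hDcomm, hDco, hDuni, hDeq =>
    exfalso
    obtain ⟨j, hj⟩ := exists_ne i
    refine hprop j (eq_top_iff.mpr ?_)
    rw [List.ofFn_zero, rprod_nil] at hDeq
    calc (⊤ : Submodule Rᵐᵒᵖ R) = rspan c := hDeq.symm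
      _ ≤ A j := rspan_le (hcmem j hj)
  | 1, D, hDprop, hDcomm, hDco, hDuni, hDeq =>
    have hD0 : rspan c = D 0 := by
      rw [List.ofFn_succ, List.ofFn_zero, rprod_singleton] at hDeq
      exact hDeq
    have hord : ∀ X Y : Submodule Rᵐᵒᵖ R, rspan c ≤ X → rspan c ≤ Y → (X ≤ Y ∨ Y ≤ X) := by
      rw [hD0]
      exact (uniserial_iff_ordered (D 0)).mp (hDuni 0)
    by_cases hex : ∃ j, j ≠ i ∧ A j ≤ A i ⊔ rspan c
    · obtain ⟨j, hj, hle⟩ := hex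
      have htop : A i ⊔ rspan c = ⊤ := by
        rw [eq_top_iff, ← sup_comax hco hj]
        exact sup_le le_sup_left hle
      have : rspan b ⊔ A i = ⊤ := by
        rw [eq_top_iff, ← htop]
        exact sup_le (le_sup_right) (hcb.trans (sup_le le_sup_left le_sup_right))
      rw [this]; trivial
    · exfalso
      push_neg at hex
      have hXle : ∀ j, j ≠ i → A i ⊔ rspan c ≤ A j := by
        intro j hj
        rcases hord (A i ⊔ rspan c) (A j) le_sup_right (rspan_le (hcmem j hj)) with h | h
        · exact h
        · exact absurd h (hex j hj)
      have hAiC : A i ≤ ⨅ k, ⨅ (_ : k ≠ i), A k := by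
        refine le_iInf fun k => le_iInf fun hk => ?_
        exact le_sup_left.trans (hXle k hk)
      obtain ⟨j, hj⟩ := exists_ne i
      refine hprop j (eq_top_iff.mpr ?_)
      calc (⊤ : Submodule Rᵐᵒᵖ R) = A i ⊔ (⨅ k, ⨅ (_ : k ≠ i), A k) := (hco i).symm
        _ ≤ ⨅ k, ⨅ (_ : k ≠ i), A k := sup_le hAiC le_rfl
        _ ≤ A j := iInf₂_le j hj
  | (m + 2), D, hDprop, hDcomm, hDco, hDuni, hDeq =>
    have hDts : ∀ k, IsTwoSidedRid (D k) := factor_twoSided D hDcomm hDco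
    have hceq : rspan c = ⨅ k, D k := hDeq.trans (rprod_eq_iInf D hDcomm hDco)
    have hcts : IsTwoSidedRid (rspan c) := by
      rw [hceq]; exact iInf_twoSided hDts
    have hrc : r * c ∈ rspan c := hcts r c (mem_rspan_self c)
    have hsplit : r * b = r * t + r * c := by rw [← htc, mul_add]
    rw [hsplit]
    exact add_mem (Submodule.mem_sup_right (hts i r t ht)) (hcb hrc)

end Key

/-- Proposition 3.4: every non-zero right ideal of `R` has a serial factorization iff `rR`
has a serial factorization for every non-zero `r ∈ R`. -/
theorem statement13 {R : Type u} [Ring R] [Nontrivial R] :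
    (∀ A : Submodule Rᵐᵒᵖ R, A ≠ ⊥ → HasSerialFact A) ↔
      ∀ r : R, r ≠ 0 → HasSerialFact (rspan r) := by
  constructor
  · intro h r hr
    exact h _ ((Submodule.ne_bot_iff _).mpr ⟨r, mem_rspan_self r, hr⟩)
  · intro hyp B hB
    obtain ⟨a, haB, ha0⟩ := (Submodule.ne_bot_iff _).mp hB
    obtain ⟨n, A, hAprop, hAcomm, hAco, hAuni, hAeq⟩ := hyp a ha0
    have haRB : rspan a ≤ B := rspan_le haB
    match n, A, hAprop, hAcomm, hAco, hAuni, hAeq with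
    | 0, A, _, _, _, _, hAeq =>
      rw [List.ofFn_zero, rprod_nil] at hAeq
      have hBtop : B = ⊤ := eq_top_iff.mpr (hAeq ▸ haRB)
      rw [hBtop]; exact hasSerialFact_top
    | 1, A, hAprop, hAcomm2, hAco2, hAuni, hAeq =>
      rw [List.ofFn_succ, List.ofFn_zero, rprod_singleton] at hAeq
      by_cases hBtop : B = ⊤
      · rw [hBtop]; exact hasSerialFact_top
      · refine ⟨1, fun _ => B, fun _ => hBtop, fun _ _ => rfl, ?_, ?_, ?_⟩
        · intro i
          have h1 : (⨅ j : Fin 1, ⨅ (_ : j ≠ i), B) = ⊤ :=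
            iInf_eq_top.mpr fun j =>
              iInf_eq_top.mpr fun hj => absurd (Subsingleton.elim j i) hj
          rw [h1, sup_top_eq]
        · intro _
          exact uniserial_of_le (hAeq ▸ haRB) (hAuni 0)
        · rw [List.ofFn_succ, List.ofFn_zero, rprod_singleton]
    | (n + 2), A, hAprop, hAcomm, hAco, hAuni, hAeq =>
      classical
      haveI : Nontrivial (Fin (n + 2)) := ⟨0, 1, by simp [Fin.ext_iff]⟩
      have hts : ∀ i, IsTwoSidedRid (A i) := factor_twoSided A hAcomm hAco
      have hinf : rspan a = ⨅ i, A i := hAeq.trans (rprod_eq_iInf A hAcomm hAco)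
      have hinfB : (⨅ i, A i) ≤ B := hinf ▸ haRB
      have key : ∀ (i : Fin (n + 2)) (b r : R), r * b ∈ rspan b ⊔ A i :=
        key_duo hyp A hAprop hAcomm hAco
      have hBeq : B = ⨅ i, (B ⊔ A i) :=
        le_antisymm (le_iInf fun _ => le_sup_left) (decomp_le A hts hAco B hinfB)
      have hBts : IsTwoSidedRid B := by
        intro r x hx
        rw [hBeq, Submodule.mem_iInf]
        intro i
        exact sup_le_sup_right (rspan_le hx) (A i) (key i x r)
      have hcommB : ∀ i j, rmul (B ⊔ A i) (B ⊔ A j) = rmul (B ⊔ A j) (B ⊔ A i) := by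
        intro i j
        rcases eq_or_ne i j with rfl | hij
        · rfl
        · rw [commB A hts hAcomm hAco B hinfB hBts hij,
            commB A hts hAcomm hAco B hinfB hBts hij.symm, hAcomm]
      set s := {i : Fin (n + 2) // B ⊔ A i ≠ ⊤} with hs
      let e : Fin (Fintype.card s) ≃ s := (Fintype.equivFin s).symm
      set F : Fin (Fintype.card s) → Submodule Rᵐᵒᵖ R := fun k => B ⊔ A (e k).1 with hF
      have hFprop : ∀ k, F k ≠ ⊤ := fun k => (e k).2
      have hFcomm : ∀ k l, rmul (F k) (F l) = rmul (F l) (F k) := fun k l => hcommB _ _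
      have hFco : Coindep F := by
        intro k
        have h2 : A (e k).1 ⊔ (⨅ j, ⨅ (_ : j ≠ (e k).1), A j) ≤
            F k ⊔ ⨅ j, ⨅ (_ : j ≠ k), F j := by
          refine sup_le (le_sup_right.trans le_sup_left) (le_trans ?_ le_sup_right)
          refine le_iInf fun l => le_iInf fun hl => ?_
          have hne : (e l).1 ≠ (e k).1 := by
            intro hEq
            exact hl (e.injective (Subtype.ext hEq))
          exact (iInf₂_le (e l).1 hne).trans le_sup_right
        rw [hAco (e k).1] at h2
        exact top_le_iff.mp h2
      have hFuni : ∀ k, IsUniserialMod Rᵐᵒᵖ (R ⧸ F k) := fun k =>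
        uniserial_of_le le_sup_right (hAuni (e k).1)
      have hFinf : (⨅ k, F k) = ⨅ i, (B ⊔ A i) := by
        refine le_antisymm (le_iInf fun i => ?_) (le_iInf fun k => iInf_le _ (e k).1)
        by_cases hi : B ⊔ A i = ⊤
        · rw [hi]; exact le_top
        · have hFv : F (e.symm ⟨i, hi⟩) = B ⊔ A i := by
            rw [hF]
            simp only [Equiv.apply_symm_apply]
          exact (iInf_le _ (e.symm ⟨i, hi⟩)).trans_eq hFv
      exact ⟨Fintype.card s, F, hFprop, hFcomm, hFco, hFuni, by
        rw [rprod_eq_iInf F hFcomm hFco, hFinf, ← hBeq]⟩
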